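/- The poset (M_ℝ, ≤_M) is a lattice in which every subset bounded above has a least upper bound, and the function d(α,β) = inf{t ≥ 0 : (−t)·α ≤_M β ≤_M t·α} (where t·[c,u] = [c,(u_1+t,…,u_n+t)]) is a metric on M_ℝ for which (M_ℝ, d) is an injective metric space. -/

import Mathlib

/-- A point of the affine version of `L` over `H`: a maximal chain
`c : ⊥ = c₀ < c₁ < ⋯ < cₙ = ⊤` of `L` together with a nondecreasing tuple
`u = (u₁ ≤ ⋯ ≤ uₙ)` of elements of `H` (indexed here by `Fin n`, so `u ⟨k⟩ = u_{k+1}`). -/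
structure AffinePt (L : Type) [Lattice L] [BoundedOrder L] (n : ℕ)
    (H : Type) [Preorder H] : Type where
  c : Fin (n + 1) → L
  hc0 : c 0 = ⊥
  hcn : c (Fin.last n) = ⊤
  hcmono : StrictMono c
  u : Fin n → H
  humono : Monotone u

/-- The basic identification: `(c, u)` and `(c', u)` are identified whenever
`u_i = u_{i+1}` for every index `1 ≤ i ≤ n - 1` with `c_i ≠ c'_i`. -/
def basicRel {L : Type} [Lattice L] [BoundedOrder L] {n : ℕ} {H : Type} [Preorder H]
    (p q : AffinePt L n H) : Prop :=
  p.u = q.u ∧ ∀ (j : ℕ) (hj : j + 1 < n),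
    p.c ⟨j + 1, by omega⟩ ≠ q.c ⟨j + 1, by omega⟩ →
      p.u ⟨j, by omega⟩ = p.u ⟨j + 1, hj⟩

/-- The affine version `M_H` of `L` over `H`: the quotient of the set of pairs `(c, u)`
by the equivalence relation generated by `basicRel`. -/
abbrev AffineVersion (L : Type) [Lattice L] [BoundedOrder L] (n : ℕ)
    (H : Type) [Preorder H] : Type :=
  Quot (basicRel (L := L) (n := n) (H := H))

/-- The class `[c, u]` of a pair `(c, u)` in the affine version. -/
def mkA {L : Type} [Lattice L] [BoundedOrder L] {n : ℕ} {H : Type} [Preorder H]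
    (p : AffinePt L n H) : AffineVersion L n H :=
  Quot.mk _ p

/-- One step of the order: `α ≤ β` via representatives `[c, x]`, `[c, y]` with the same
chain `c` and `x ≤ y` coordinatewise. -/
def stepLe {L : Type} [Lattice L] [BoundedOrder L] {n : ℕ} {H : Type} [Preorder H]
    (α β : AffineVersion L n H) : Prop :=
  ∃ p q : AffinePt L n H, mkA p = α ∧ mkA q = β ∧ p.c = q.c ∧ ∀ k, p.u k ≤ q.u k

/-- The order `≤_M` on the affine version: the reflexive-transitive closure of `stepLe`,
i.e. existence of a finite sequence of one-chain comparisons. -/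
def leM {L : Type} [Lattice L] [BoundedOrder L] {n : ℕ} {H : Type} [Preorder H]
    (α β : AffineVersion L n H) : Prop :=
  Relation.ReflTransGen stepLe α β

/-- Translation of a point of the affine version over `ℝ` by `t`. -/
def translatePt {L : Type} [Lattice L] [BoundedOrder L] {n : ℕ} (t : ℝ)
    (p : AffinePt L n ℝ) : AffinePt L n ℝ where
  c := p.c
  hc0 := p.hc0
  hcn := p.hcn
  hcmono := p.hcmono
  u := fun k => p.u k + t
  humono := fun _ _ h => add_le_add_left (p.humono h) t

/-- The translation action of `ℝ` on `M_ℝ`: `t · [c, u] = [c, (u₁ + t, …, uₙ + t)]`. -/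
def translateAff {L : Type} [Lattice L] [BoundedOrder L] {n : ℕ} (t : ℝ) :
    AffineVersion L n ℝ → AffineVersion L n ℝ :=
  Quot.map (translatePt t) (by
    intro p q hpq
    obtain ⟨hu, hc⟩ := hpq
    constructor
    · funext k
      show p.u k + t = q.u k + t
      rw [hu]
    · intro j hj hne
      exact congrArg (fun z => z + t) (hc j hj hne))

namespace Aux14
variable {L : Type} [Lattice L] [BoundedOrder L] {n : ℕ}

/-- number of coordinates of `u` that are `≤ s`. -/
noncomputable def cnt (u : Fin n → ℝ) (s : ℝ) : ℕ := (Finset.univ.filter fun i => u i ≤ s).card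

lemma cnt_le (u : Fin n → ℝ) (s : ℝ) : cnt u s ≤ n := by
  simpa [cnt] using (Finset.card_filter_le Finset.univ fun i => u i ≤ s)

lemma cnt_lt (u : Fin n → ℝ) (s : ℝ) : cnt u s < n + 1 :=
  Nat.lt_succ_of_le (cnt_le u s)

lemma lt_cnt_iff {u : Fin n → ℝ} (hu : Monotone u) {s : ℝ} {i : Fin n} :
    (i : ℕ) < cnt u s ↔ u i ≤ s := by
  constructor
  · intro h
    by_contra hn
    have hsub : (Finset.univ.filter fun j => u j ≤ s) ⊆ Finset.Iio i := by
      intro j hj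
      simp only [Finset.mem_filter] at hj
      rcases lt_or_ge j i with h1 | h1
      · exact Finset.mem_Iio.2 h1
      · exact absurd (le_trans (hu h1) hj.2) hn
    have := Finset.card_le_card hsub
    rw [Fin.card_Iio] at this
    exact absurd (lt_of_lt_of_le h this) (lt_irrefl _)
  · intro h
    have hsub : Finset.Iic i ⊆ (Finset.univ.filter fun j => u j ≤ s) := by
      intro j hj
      simp only [Finset.mem_filter, Finset.mem_univ, true_and]
      exact le_trans (hu (Finset.mem_Iic.1 hj)) h
    have := Finset.card_le_card hsub
    rw [Fin.card_Iic] at this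
    exact lt_of_lt_of_le (Nat.lt_succ_self _) this

lemma cnt_mono (u : Fin n → ℝ) : Monotone (cnt u) := by
  intro s t hst
  apply Finset.card_le_card
  intro j hj
  simp only [Finset.mem_filter, Finset.mem_univ, true_and] at hj ⊢
  exact le_trans hj hst

/-- the step function associated to a representative. -/
noncomputable def phiPt (p : AffinePt L n ℝ) (s : ℝ) : L := p.c ⟨cnt p.u s, cnt_lt _ _⟩

lemma phiPt_sound {p q : AffinePt L n ℝ} (h : basicRel p q) : phiPt p = phiPt q := by
  obtain ⟨hu, hc⟩ := h
  funext s
  have hcnt : cnt q.u s = cnt p.u s := by rw [hu]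
  obtain ⟨k, hk⟩ : ∃ k, cnt p.u s = k := ⟨_, rfl⟩
  have hk1 : k < n + 1 := hk ▸ cnt_lt p.u s
  show p.c ⟨cnt p.u s, _⟩ = q.c ⟨cnt q.u s, _⟩
  have e1 : (⟨cnt p.u s, cnt_lt _ _⟩ : Fin (n+1)) = ⟨k, hk1⟩ :=
    Fin.ext hk
  have e2 : (⟨cnt q.u s, cnt_lt _ _⟩ : Fin (n+1)) = ⟨k, hk1⟩ :=
    Fin.ext (show cnt q.u s = k by rw [hcnt, hk])
  rw [e1, e2]
  by_contra hne
  rcases Nat.eq_zero_or_pos k with h0 | hpos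
  · apply hne
    have e : (⟨k, hk1⟩ : Fin (n+1)) = 0 := Fin.ext (by simp [h0])
    rw [e, p.hc0, q.hc0]
  have hkn : k ≤ n := hk ▸ cnt_le p.u s
  rcases eq_or_lt_of_le hkn with hn' | hlt
  · apply hne
    have e : (⟨k, hk1⟩ : Fin (n+1)) = Fin.last n := Fin.ext (by simp [hn'])
    rw [e, p.hcn, q.hcn]
  obtain ⟨j, rfl⟩ : ∃ j, k = j + 1 := ⟨k - 1, by omega⟩
  have hj : j + 1 < n := hlt
  have heq := hc j hj hne
  have h1 : p.u ⟨j, by omega⟩ ≤ s := by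
    have hlt' : ((⟨j, by omega⟩ : Fin n) : ℕ) < cnt p.u s := by simp [hk]
    exact (lt_cnt_iff p.humono).1 hlt'
  have h2 : ¬ p.u ⟨j + 1, hj⟩ ≤ s := by
    intro hle
    have := (lt_cnt_iff p.humono (i := ⟨j + 1, hj⟩)).2 hle
    simp only [hk] at this
    omega
  rw [heq] at h1
  exact h2 h1


/-- The step function attached to a point of the affine version. -/
noncomputable def Phi : AffineVersion L n ℝ → ℝ → L :=
  Quot.lift phiPt fun _ _ h => phiPt_sound h

@[simp] lemma Phi_mk (p : AffinePt L n ℝ) : Phi (mkA p) = phiPt p := rfl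

end Aux14
namespace Aux14
variable {L : Type} [Lattice L] [BoundedOrder L] {n : ℕ}
variable {rk : L → ℕ}

section RK
variable (hrk0 : rk ⊥ = 0) (hrkn : rk ⊤ = n) (hrkmono : StrictMono rk)

lemma eq_of_le_of_rk_le (hrkmono : StrictMono rk) {x y : L} (h : x ≤ y)
    (hr : rk y ≤ rk x) : x = y := by
  rcases eq_or_lt_of_le h with h' | h'
  · exact h'
  · exact absurd (hrkmono h') (by omega)

lemma le_of_cmp_rk_le (hrkmono : StrictMono rk) {x y : L} (h : x ≤ y ∨ y ≤ x)
    (hr : rk x ≤ rk y) : x ≤ y := by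
  rcases h with h | h
  · exact h
  · exact le_of_eq (eq_of_le_of_rk_le hrkmono h hr).symm

lemma rk_le_n (hrkn : rk ⊤ = n) (hrkmono : StrictMono rk) (x : L) : rk x ≤ n := hrkn ▸ hrkmono.monotone (le_top : x ≤ ⊤)

lemma rkc (hrk0 : rk ⊥ = 0) (hrkn : rk ⊤ = n) (hrkmono : StrictMono rk)
    (p : AffinePt L n ℝ) (k : Fin (n + 1)) : rk (p.c k) = (k : ℕ) := by
  have key : ∀ (d : ℕ) (i j : Fin (n+1)), (j : ℕ) = (i : ℕ) + d →
      rk (p.c i) + d ≤ rk (p.c j) := by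
    intro d
    induction d with
    | zero => intro i j hij; have : i = j := Fin.ext (by omega); subst this; simp
    | succ d ih =>
      intro i j hij
      have hj' : (i : ℕ) + d < n + 1 := by omega
      have h1 := ih i ⟨(i : ℕ) + d, hj'⟩ rfl
      have h2 : (⟨(i : ℕ) + d, hj'⟩ : Fin (n+1)) < j := by
        rw [Fin.lt_def]; simp; omega
      have := hrkmono (p.hcmono h2)
      omega
  have low : ((k : ℕ) : ℕ) ≤ rk (p.c k) := by
    have := key (k : ℕ) 0 k (by simp)
    rw [p.hc0, hrk0] at this
    omega
  have high : rk (p.c k) + (n - (k : ℕ)) ≤ n := by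
    have := key (n - (k : ℕ)) k (Fin.last n) (by simp; omega)
    rw [p.hcn, hrkn] at this
    omega
  have : (k : ℕ) ≤ n := by omega
  omega

lemma rk_phiPt (hrk0 : rk ⊥ = 0) (hrkn : rk ⊤ = n) (hrkmono : StrictMono rk)
    (p : AffinePt L n ℝ) (s : ℝ) : rk (phiPt p s) = cnt p.u s :=
  rkc hrk0 hrkn hrkmono p ⟨cnt p.u s, cnt_lt _ _⟩

lemma u_eq_sInf (p : AffinePt L n ℝ) (i : Fin n) :
    p.u i = sInf {s : ℝ | (i : ℕ) < cnt p.u s} := by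
  have : {s : ℝ | (i : ℕ) < cnt p.u s} = Set.Ici (p.u i) := by
    ext s
    simp only [Set.mem_setOf_eq, Set.mem_Ici]
    rw [lt_cnt_iff p.humono]
  rw [this, csInf_Ici]

set_option maxHeartbeats 1000000 in
lemma phiPt_inj (hrk0 : rk ⊥ = 0) (hrkn : rk ⊤ = n) (hrkmono : StrictMono rk)
    {p q : AffinePt L n ℝ} (hphi : phiPt p = phiPt q) : mkA p = mkA q := by
  have hcnt : ∀ s, cnt p.u s = cnt q.u s := by
    intro s
    rw [← rk_phiPt hrk0 hrkn hrkmono p s, ← rk_phiPt hrk0 hrkn hrkmono q s, hphi]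
  have hu : p.u = q.u := by
    funext i
    rw [u_eq_sInf p i, u_eq_sInf q i]
    congr 1
    ext s
    simp [hcnt s]
  apply Quot.sound
  refine ⟨hu, fun j hj hne => ?_⟩
  by_contra hne2
  have hlt : p.u ⟨j, by omega⟩ < p.u ⟨j+1, hj⟩ :=
    lt_of_le_of_ne (p.humono (by simp [Fin.mk_le_mk])) hne2
  -- at s := p.u ⟨j⟩ the count is j+1
  have hcj : cnt p.u (p.u ⟨j, by omega⟩) = j + 1 := by
    have h1 : (j : ℕ) < cnt p.u (p.u ⟨j, by omega⟩) := by
      have := (lt_cnt_iff p.humono (i := ⟨j, by omega⟩) (s := p.u ⟨j, by omega⟩)).2 le_rfl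
      simpa using this
    have h2 : ¬ ((j + 1 : ℕ) < cnt p.u (p.u ⟨j, by omega⟩)) := by
      intro hcon
      have := (lt_cnt_iff p.humono (i := ⟨j+1, hj⟩) (s := p.u ⟨j, by omega⟩)).1 (by simpa using hcon)
      exact absurd this (not_le.2 hlt)
    omega
  have := congrFun hphi (p.u ⟨j, by omega⟩)
  unfold phiPt at this
  apply hne
  have e1 : (⟨cnt p.u (p.u ⟨j, by omega⟩), cnt_lt _ _⟩ : Fin (n+1)) = ⟨j+1, by omega⟩ :=
    Fin.ext hcj
  have e2 : (⟨cnt q.u (p.u ⟨j, by omega⟩), cnt_lt _ _⟩ : Fin (n+1)) = ⟨j+1, by omega⟩ :=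
    Fin.ext ((hcnt _).symm.trans hcj)
  rw [e1, e2] at this
  exact this

lemma Phi_inj (hrk0 : rk ⊥ = 0) (hrkn : rk ⊤ = n) (hrkmono : StrictMono rk)
    {α β : AffineVersion L n ℝ} (h : Phi α = Phi β) : α = β := by
  induction α using Quot.ind
  induction β using Quot.ind
  exact phiPt_inj hrk0 hrkn hrkmono h

end RK

/-- right continuity -/
def RightCont (F : ℝ → L) : Prop := ∀ s, ∃ δ, 0 < δ ∧ ∀ t, s ≤ t → t < s + δ → F t = F s

/-- the conditions characterizing step functions attached to points of `M`. -/
def StepM (F : ℝ → L) : Prop :=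
  Monotone F ∧ RightCont F ∧ (∃ a, ∀ s, s ≤ a → F s = ⊥) ∧ (∃ b, ∀ s, b ≤ s → F s = ⊤)

lemma cnt_rightCont (u : Fin n → ℝ) (s : ℝ) :
    ∃ δ, 0 < δ ∧ ∀ t, s ≤ t → t < s + δ → cnt u t = cnt u s := by
  classical
  set A := Finset.univ.filter (fun i => s < u i) with hA
  rcases Finset.eq_empty_or_nonempty A with hAe | hAne
  · refine ⟨1, one_pos, fun t hst _ => ?_⟩
    unfold cnt
    congr 1
    apply Finset.filter_congr
    intro i _
    have hi : u i ≤ s := by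
      by_contra hcon
      have : i ∈ A := by simp [hA, lt_of_not_ge hcon]
      simp [hAe] at this
    simp [hi, hi.trans hst]
  · refine ⟨A.inf' hAne (fun i => u i - s), ?_, ?_⟩
    · rw [Finset.lt_inf'_iff]
      intro i hi
      simp only [hA, Finset.mem_filter] at hi
      linarith [hi.2]
    · intro t hst ht
      unfold cnt
      congr 1
      apply Finset.filter_congr
      intro i _
      constructor
      · intro hit
        by_contra hcon
        have hiA : i ∈ A := by simp [hA, lt_of_not_ge hcon]
        have := Finset.inf'_le (fun i => u i - s) hiA
        linarith
      · intro his; exact his.trans hst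

lemma phiPt_mono (p : AffinePt L n ℝ) : Monotone (phiPt p) := by
  intro s t hst
  exact p.hcmono.monotone (by simp [Fin.mk_le_mk]; exact cnt_mono p.u hst)

lemma phiPt_stepM (p : AffinePt L n ℝ) : StepM (phiPt p) := by
  refine ⟨phiPt_mono p, ?_, ?_, ?_⟩
  · intro s
    obtain ⟨δ, hδ, hc⟩ := cnt_rightCont p.u s
    exact ⟨δ, hδ, fun t h1 h2 => by unfold phiPt; congr 1; exact Fin.ext (hc t h1 h2)⟩
  · rcases Nat.eq_zero_or_pos n with h0 | hpos
    · refine ⟨0, fun s _ => ?_⟩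
      unfold phiPt
      have : (⟨cnt p.u s, cnt_lt _ _⟩ : Fin (n+1)) = 0 := by
        apply Fin.ext
        have := cnt_le p.u s
        simp; omega
      rw [this, p.hc0]
    · refine ⟨p.u ⟨0, hpos⟩ - 1, fun s hs => ?_⟩
      have hcnt : cnt p.u s = 0 := by
        unfold cnt
        rw [Finset.card_eq_zero, Finset.filter_eq_empty_iff]
        intro i _
        simp only [not_le]
        calc s ≤ p.u ⟨0, hpos⟩ - 1 := hs
        _ < p.u ⟨0, hpos⟩ := by linarith
        _ ≤ p.u i := p.humono (by rw [Fin.le_def]; exact Nat.zero_le _)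
      unfold phiPt
      have : (⟨cnt p.u s, cnt_lt _ _⟩ : Fin (n+1)) = 0 := Fin.ext (by simp [hcnt])
      rw [this, p.hc0]
  · rcases Nat.eq_zero_or_pos n with h0 | hpos
    · refine ⟨0, fun s _ => ?_⟩
      unfold phiPt
      have : (⟨cnt p.u s, cnt_lt _ _⟩ : Fin (n+1)) = Fin.last n := by
        apply Fin.ext
        have := cnt_le p.u s
        simp; omega
      rw [this, p.hcn]
    · refine ⟨p.u ⟨n - 1, by omega⟩, fun s hs => ?_⟩
      have hcnt : cnt p.u s = n := by
        unfold cnt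
        have : Finset.univ.filter (fun i => p.u i ≤ s) = Finset.univ := by
          rw [Finset.filter_eq_self]
          intro i _
          exact le_trans (p.humono (by rw [Fin.le_def]; have := i.isLt; simp; omega)) hs
        rw [this]
        simp
      unfold phiPt
      have : (⟨cnt p.u s, cnt_lt _ _⟩ : Fin (n+1)) = Fin.last n := Fin.ext (by simp [hcnt])
      rw [this, p.hcn]

lemma Phi_stepM (α : AffineVersion L n ℝ) : StepM (Phi α) := by
  induction α using Quot.ind with | _ p => exact phiPt_stepM p

lemma Phi_antitone {α β : AffineVersion L n ℝ} (h : leM α β) : ∀ s, Phi β s ≤ Phi α s := by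
  induction h with
  | refl => exact fun s => le_rfl
  | tail h1 h2 ih =>
    intro s
    refine le_trans ?_ (ih s)
    obtain ⟨p, q, hp, hq, hcpq, hu⟩ := h2
    rw [← hp, ← hq]
    show phiPt q s ≤ phiPt p s
    have hcnt : cnt q.u s ≤ cnt p.u s := by
      apply Finset.card_le_card
      intro i hi
      simp only [Finset.mem_filter, Finset.mem_univ, true_and] at hi ⊢
      exact le_trans (hu i) hi
    calc phiPt q s = q.c ⟨cnt q.u s, cnt_lt _ _⟩ := rfl
    _ ≤ q.c ⟨cnt p.u s, cnt_lt _ _⟩ := q.hcmono.monotone (by simp [Fin.mk_le_mk]; omega)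
    _ = p.c ⟨cnt p.u s, cnt_lt _ _⟩ := by rw [hcpq]
    _ = phiPt p s := rfl

end Aux14
namespace Aux14
variable {L : Type} [Lattice L] [BoundedOrder L] {n : ℕ} {rk : L → ℕ}

lemma chain_cmp {V : Set L} (hV : IsChain (· ≤ ·) V) {a b : L} (ha : a ∈ V) (hb : b ∈ V) :
    a ≤ b ∨ b ≤ a := hV.total ha hb

lemma exists_isGLB (hrkmono : StrictMono rk) (S : Set L) (hS : S.Nonempty) :
    ∃ m, IsGLB S m := by
  classical
  obtain ⟨s₀, hs₀⟩ := hS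
  have hTne : ∃ r, ∃ y, (∃ t : Finset L, ∃ ht : t.Nonempty, ↑t ⊆ S ∧ y = t.inf' ht id) ∧ rk y = r :=
    ⟨rk s₀, s₀, ⟨{s₀}, ⟨s₀, by simp⟩, by simpa using hs₀, by simp⟩, rfl⟩
  obtain ⟨y₀, hy₀T, hy₀r⟩ := Nat.find_spec hTne
  refine ⟨y₀, ?_, ?_⟩
  · intro s hs
    obtain ⟨t, ht, htS, hy⟩ := hy₀T
    have hmem : ∃ t' : Finset L, ∃ ht' : t'.Nonempty, ↑t' ⊆ S ∧ y₀ ⊓ s = t'.inf' ht' id := by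
      refine ⟨insert s t, ⟨s, by simp⟩, ?_, ?_⟩
      · intro x hx
        simp only [Finset.coe_insert, Set.mem_insert_iff] at hx
        rcases hx with rfl | hx
        · exact hs
        · exact htS hx
      · rw [Finset.inf'_insert, ← hy, inf_comm]
        rfl
        exact ht
    have hge : ¬ rk (y₀ ⊓ s) < Nat.find hTne :=
      fun hlt => Nat.find_min hTne hlt ⟨y₀ ⊓ s, hmem, rfl⟩
    have heq : y₀ ⊓ s = y₀ := by
      rcases eq_or_lt_of_le (inf_le_left : y₀ ⊓ s ≤ y₀) with h | h
      · exact h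
      · exact absurd (hrkmono h) (by omega)
    calc y₀ = y₀ ⊓ s := heq.symm
    _ ≤ s := inf_le_right
  · intro l hl
    obtain ⟨t, ht, htS, hy⟩ := hy₀T
    rw [hy]
    exact Finset.le_inf' ht id fun b hb => hl (htS hb)

lemma exists_isLUB (hrkn : rk ⊤ = n) (hrkmono : StrictMono rk) (S : Set L) (hS : S.Nonempty) :
    ∃ m, IsLUB S m := by
  classical
  obtain ⟨s₀, hs₀⟩ := hS
  set P : ℕ → Prop := fun r => ∃ y, (∃ t : Finset L, ∃ ht : t.Nonempty, ↑t ⊆ S ∧ y = t.sup' ht id) ∧ rk y = r with hP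
  have hP0 : P (rk s₀) := ⟨s₀, ⟨{s₀}, ⟨s₀, by simp⟩, by simpa using hs₀, by simp⟩, rfl⟩
  have hbd : ∀ y : L, rk y ≤ n := fun y => hrkn ▸ hrkmono.monotone (le_top : y ≤ ⊤)
  have hspec : P (Nat.findGreatest P n) :=
    Nat.findGreatest_spec (m := rk s₀) (hbd s₀) hP0
  obtain ⟨y₀, hy₀T, hy₀r⟩ := hspec
  refine ⟨y₀, ?_, ?_⟩
  · intro s hs
    obtain ⟨t, ht, htS, hy⟩ := hy₀T
    have hmem : P (rk (y₀ ⊔ s)) := by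
      refine ⟨y₀ ⊔ s, ⟨insert s t, ⟨s, by simp⟩, ?_, ?_⟩, rfl⟩
      · intro x hx
        simp only [Finset.coe_insert, Set.mem_insert_iff] at hx
        rcases hx with rfl | hx
        · exact hs
        · exact htS hx
      · rw [Finset.sup'_insert, ← hy, sup_comm]
        rfl
        exact ht
    have hge : rk (y₀ ⊔ s) ≤ Nat.findGreatest P n :=
      Nat.le_findGreatest (hbd _) hmem
    have heq : y₀ = y₀ ⊔ s := by
      rcases eq_or_lt_of_le (le_sup_left : y₀ ≤ y₀ ⊔ s) with h | h
      · exact h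
      · exact absurd (hrkmono h) (by omega)
    calc s ≤ y₀ ⊔ s := le_sup_right
    _ = y₀ := heq.symm
  · intro l hl
    obtain ⟨t, ht, htS, hy⟩ := hy₀T
    rw [hy]
    exact Finset.sup'_le ht id fun b hb => hl (htS hb)

lemma chain_min (hrkmono : StrictMono rk) {V : Set L} (hV : IsChain (· ≤ ·) V)
    (hne : V.Nonempty) : ∃ v ∈ V, ∀ w ∈ V, v ≤ w := by
  classical
  obtain ⟨v₀, hv₀⟩ := hne
  have hTne : ∃ r, ∃ v ∈ V, rk v = r := ⟨rk v₀, v₀, hv₀, rfl⟩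
  obtain ⟨v, hvV, hvr⟩ := Nat.find_spec hTne
  refine ⟨v, hvV, fun w hw => ?_⟩
  have : ¬ rk w < Nat.find hTne := fun hlt => Nat.find_min hTne hlt ⟨w, hw, rfl⟩
  exact le_of_cmp_rk_le hrkmono (chain_cmp hV hvV hw) (by omega)

lemma mono_range_chain {F : ℝ → L} (hF : Monotone F) : IsChain (· ≤ ·) (Set.range F) := by
  rintro _ ⟨s, rfl⟩ _ ⟨t, rfl⟩ _
  rcases le_total s t with h | h
  · exact Or.inl (hF h)
  · exact Or.inr (hF h)

lemma range_finite (hrkn : rk ⊤ = n) (hrkmono : StrictMono rk) {F : ℝ → L}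
    (hF : Monotone F) : (Set.range F).Finite := by
  apply Set.Finite.of_finite_image (f := rk)
  · exact (Set.finite_Iic n).subset (by
      rintro _ ⟨x, _, rfl⟩
      exact hrkn ▸ hrkmono.monotone (le_top : x ≤ ⊤))
  · intro x hx y hy hxy
    have h1 := le_of_cmp_rk_le hrkmono (chain_cmp (mono_range_chain hF) hx hy) (le_of_eq hxy)
    have h2 := le_of_cmp_rk_le hrkmono (chain_cmp (mono_range_chain hF) hy hx) (le_of_eq hxy.symm)
    exact le_antisymm h1 h2

/-- interpolation of a chain subset of `L` by a full flag -/
lemma chain_interp (hrk0 : rk ⊥ = 0) (hrkn : rk ⊤ = n) (hrkmono : StrictMono rk)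
    (hrkcov : ∀ x y : L, x ⋖ y → rk y = rk x + 1)
    (V : Set L) (hV : IsChain (· ≤ ·) V) (hVtop : (⊤ : L) ∈ V) :
    ∃ c : Fin (n+1) → L, StrictMono c ∧ c 0 = ⊥ ∧ c (Fin.last n) = ⊤ ∧
      ∀ v ∈ V, ∀ h : rk v < n + 1, c ⟨rk v, h⟩ = v := by
  classical
  set Inv : ℕ → L → Prop := fun k x => rk x = k ∧ (∀ v ∈ V, rk v ≤ k → v ≤ x) ∧
    (∀ v ∈ V, k ≤ rk v → x ≤ v) with hInv
  have inv0 : Inv 0 ⊥ := by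
    refine ⟨hrk0, fun v hv hr => ?_, fun v _ _ => bot_le⟩
    have : (⊥ : L) = v := eq_of_le_of_rk_le hrkmono bot_le (by omega)
    exact le_of_eq this.symm
  have next : ∀ k x, k < n → Inv k x → ∃ y, Inv (k+1) y ∧ x < y := by
    intro k x hk hx
    obtain ⟨hxr, hx2, hx3⟩ := hx
    have hBne : ∃ m, ∃ v, (v ∈ V ∧ k + 1 ≤ rk v) ∧ rk v = m :=
      ⟨rk ⊤, ⊤, ⟨hVtop, by omega⟩, rfl⟩
    obtain ⟨b, ⟨hbV, hbk⟩, hbr⟩ := Nat.find_spec hBne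
    have hxb : x < b := by
      refine lt_of_le_of_ne (hx3 b hbV (by omega)) fun he => ?_
      rw [← he] at hbk
      omega
    have hCne : ∃ m, ∃ z, (x < z ∧ z ≤ b) ∧ rk z = m := ⟨rk b, b, ⟨hxb, le_rfl⟩, rfl⟩
    obtain ⟨z, ⟨hxz, hzb⟩, hzr⟩ := Nat.find_spec hCne
    have hcov : x ⋖ z := by
      refine ⟨hxz, fun w hxw hwz => ?_⟩
      exact Nat.find_min hCne (hzr ▸ hrkmono hwz) ⟨w, ⟨hxw, le_of_lt (lt_of_lt_of_le hwz hzb)⟩, rfl⟩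
    have hzr1 : rk z = k + 1 := by rw [hrkcov x z hcov, hxr]
    refine ⟨z, ⟨hzr1, ?_, ?_⟩, hxz⟩
    · intro v hv hrv
      rcases Nat.lt_or_ge (rk v) (k+1) with h | h
      · exact le_trans (hx2 v hv (by omega)) (le_of_lt hxz)
      · -- rk v = k + 1
        have hm : Nat.find hBne ≤ rk v := Nat.find_min' hBne ⟨v, ⟨hv, by omega⟩, rfl⟩
        have hm2 : Nat.find hCne ≤ rk b := Nat.find_min' hCne ⟨b, ⟨hxb, le_rfl⟩, rfl⟩
        have hvk : rk v = k + 1 := by omega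
        have hbk2 : rk b = k + 1 := by omega
        have hzb2 : z = b := eq_of_le_of_rk_le hrkmono hzb (by omega)
        have hvb : v = b := by
          have h1 := le_of_cmp_rk_le hrkmono (chain_cmp hV hv hbV) (by omega)
          have h2 := le_of_cmp_rk_le hrkmono (chain_cmp hV hbV hv) (by omega)
          exact le_antisymm h1 h2
        rw [hvb, ← hzb2]
    · intro v hv hrv
      have hm : Nat.find hBne ≤ rk v := Nat.find_min' hBne ⟨v, ⟨hv, hrv⟩, rfl⟩
      have hbv : b ≤ v := le_of_cmp_rk_le hrkmono (chain_cmp hV hbV hv) (by omega)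
      exact le_trans hzb hbv
  have next' : ∀ k x, ∃ y, (k < n ∧ Inv k x) → (Inv (k+1) y ∧ x < y) := by
    intro k x
    by_cases h : k < n ∧ Inv k x
    · obtain ⟨y, hy⟩ := next k x h.1 h.2
      exact ⟨y, fun _ => hy⟩
    · exact ⟨⊤, fun hc => absurd hc h⟩
  let g : ℕ → L := fun k =>
    Nat.rec ⊥ (fun k ih => Classical.choose (next' k ih)) k
  have hg0 : g 0 = ⊥ := rfl
  have hgsucc : ∀ k, (k < n ∧ Inv k (g k)) → (Inv (k+1) (g (k+1)) ∧ g k < g (k+1)) :=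
    fun k => Classical.choose_spec (next' k (g k))
  have hinv : ∀ k, k ≤ n → Inv k (g k) := by
    intro k
    induction k with
    | zero => intro _; exact inv0
    | succ k ih =>
      intro hk
      have hk' : k < n := by omega
      exact (hgsucc k ⟨hk', ih (by omega)⟩).1
  have hltg : ∀ k, k < n → g k < g (k+1) := by
    intro k hk
    exact (hgsucc k ⟨hk, hinv k (by omega)⟩).2
  have gmono : ∀ j, j ≤ n → ∀ i, i < j → g i < g j := by
    intro j
    induction j with
    | zero => omega
    | succ j ih =>
      intro hj i hi
      have h1 : g j < g (j+1) := hltg j (by omega)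
      rcases Nat.lt_or_ge i j with h | h
      · exact (ih (by omega) i h).trans h1
      · have : i = j := by omega
        subst this
        exact h1
  refine ⟨fun k => g k, ?_, hg0, ?_, ?_⟩
  · intro a b hab
    exact gmono b.val (by omega) a.val (Fin.lt_def.1 hab)
  · have hin := hinv n le_rfl
    exact le_antisymm le_top (hin.2.1 ⊤ hVtop (by rw [hrkn]))
  · intro v hv h
    have hin := hinv (rk v) (by omega)
    exact le_antisymm (hin.2.2 v hv le_rfl) (hin.2.1 v hv le_rfl)

end Aux14
namespace Aux14
variable {L : Type} [Lattice L] [BoundedOrder L] {n : ℕ} {rk : L → ℕ}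

section SURJ
variable (hrk0 : rk ⊥ = 0) (hrkn : rk ⊤ = n) (hrkmono : StrictMono rk)
include hrk0 hrkn hrkmono

/-- the set of times where the rank of `F` exceeds `i` -/
lemma Tfacts {F : ℝ → L} (hF : StepM F) (i : Fin n) :
    {s : ℝ | (i : ℕ) < rk (F s)}.Nonempty ∧ BddBelow {s : ℝ | (i : ℕ) < rk (F s)} ∧
      ∀ s, s ∈ {s : ℝ | (i : ℕ) < rk (F s)} ↔ sInf {s : ℝ | (i : ℕ) < rk (F s)} ≤ s := by
  obtain ⟨hmono, hrc, ⟨a, ha⟩, ⟨b, hb⟩⟩ := hF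
  set T := {s : ℝ | (i : ℕ) < rk (F s)} with hT
  have hne : T.Nonempty := ⟨b, by simp [hT, hb b le_rfl, hrkn, i.isLt]⟩
  have hbdd : BddBelow T := by
    refine ⟨a, fun s hs => ?_⟩
    by_contra hcon
    have : F s = ⊥ := ha s (le_of_not_ge hcon)
    simp [hT, this, hrk0] at hs
  have hup : ∀ s t, s ∈ T → s ≤ t → t ∈ T := by
    intro s t hs hst
    simp only [hT, Set.mem_setOf_eq] at hs ⊢
    exact lt_of_lt_of_le hs (hrkmono.monotone (hmono hst))
  have hmem : sInf T ∈ T := by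
    obtain ⟨δ, hδ, hcst⟩ := hrc (sInf T)
    have h1 : sInf T < sInf T + δ := by linarith
    obtain ⟨t, htT, htlt⟩ := (csInf_lt_iff hbdd hne).1 h1
    have htge : sInf T ≤ t := csInf_le hbdd htT
    have : F t = F (sInf T) := hcst t htge htlt
    simpa only [hT, Set.mem_setOf_eq, this] using htT
  exact ⟨hne, hbdd, fun s => ⟨fun hs => csInf_le hbdd hs, fun h => hup _ _ hmem h⟩⟩

/-- the tuple of jump times of a step function -/
noncomputable def uOf (F : ℝ → L) (rk : L → ℕ) : Fin n → ℝ :=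
  fun i => sInf {s : ℝ | (i : ℕ) < rk (F s)}

lemma uOf_mono {F : ℝ → L} (hF : StepM F) : Monotone (uOf (n := n) F rk) := by
  intro i j hij
  obtain ⟨hne, hbdd, _⟩ := Tfacts hrk0 hrkn hrkmono hF j
  apply csInf_le_csInf (Tfacts hrk0 hrkn hrkmono hF i).2.1 hne
  intro s hs
  simp only [Set.mem_setOf_eq] at hs ⊢
  have : (i : ℕ) ≤ (j : ℕ) := hij
  omega

lemma cnt_uOf {F : ℝ → L} (hF : StepM F) (s : ℝ) :
    cnt (uOf (n := n) F rk) s = rk (F s) := by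
  have hiff : ∀ i : Fin n, uOf (n := n) F rk i ≤ s ↔ (i : ℕ) < rk (F s) := by
    intro i
    have := (Tfacts hrk0 hrkn hrkmono hF i).2.2 s
    simp only [Set.mem_setOf_eq] at this
    exact ⟨fun h => this.2 h, fun h => this.1 h⟩
  have hrkle : rk (F s) ≤ n := hrkn ▸ hrkmono.monotone (le_top : F s ≤ ⊤)
  rcases lt_trichotomy (cnt (uOf (n := n) F rk) s) (rk (F s)) with h | h | h
  · exfalso
    have hlt : cnt (uOf (n := n) F rk) s < n := lt_of_lt_of_le h hrkle
    have h1 : uOf (n := n) F rk ⟨cnt (uOf (n := n) F rk) s, hlt⟩ ≤ s := (hiff ⟨_, hlt⟩).2 h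
    have := (lt_cnt_iff (uOf_mono hrk0 hrkn hrkmono hF)).2 h1
    simp at this
  · exact h
  · exfalso
    have hlt : rk (F s) < n := lt_of_lt_of_le h (cnt_le _ _)
    have h1 := (lt_cnt_iff (uOf_mono hrk0 hrkn hrkmono hF) (i := ⟨rk (F s), hlt⟩)).1 (by simpa using h)
    have := (hiff ⟨rk (F s), hlt⟩).1 h1
    simp at this

variable (hrkcov : ∀ x y : L, x ⋖ y → rk y = rk x + 1)
include hrkcov

/-- simultaneous realization of two comparable step functions over a common chain -/
lemma exists_pt_pair {F G : ℝ → L} (hF : StepM F) (hG : StepM G) (hGF : ∀ s, G s ≤ F s)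
    (hch : IsChain (· ≤ ·) (Set.range F ∪ Set.range G)) :
    ∃ p q : AffinePt L n ℝ, p.c = q.c ∧ (∀ k, p.u k ≤ q.u k) ∧ phiPt p = F ∧ phiPt q = G := by
  have htop : (⊤ : L) ∈ Set.range F ∪ Set.range G := by
    obtain ⟨b, hb⟩ := hF.2.2.2
    exact Or.inl ⟨b, hb b le_rfl⟩
  obtain ⟨c, hsm, hc0, hcn, hcv⟩ := chain_interp hrk0 hrkn hrkmono hrkcov _ hch htop
  have hrkle : ∀ x : L, rk x < n + 1 :=
    fun x => Nat.lt_succ_of_le (hrkn ▸ hrkmono.monotone (le_top : x ≤ ⊤))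
  set p : AffinePt L n ℝ := ⟨c, hc0, hcn, hsm, uOf (n := n) F rk, uOf_mono hrk0 hrkn hrkmono hF⟩
    with hp
  set q : AffinePt L n ℝ := ⟨c, hc0, hcn, hsm, uOf (n := n) G rk, uOf_mono hrk0 hrkn hrkmono hG⟩
    with hq
  refine ⟨p, q, rfl, ?_, ?_, ?_⟩
  · intro k
    show uOf (n := n) F rk k ≤ uOf (n := n) G rk k
    apply csInf_le_csInf (Tfacts hrk0 hrkn hrkmono hF k).2.1 (Tfacts hrk0 hrkn hrkmono hG k).1
    intro s hs
    simp only [Set.mem_setOf_eq] at hs ⊢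
    exact lt_of_lt_of_le hs (hrkmono.monotone (hGF s))
  · funext s
    show c ⟨cnt (uOf (n := n) F rk) s, cnt_lt _ _⟩ = F s
    have e : (⟨cnt (uOf (n := n) F rk) s, cnt_lt _ _⟩ : Fin (n+1)) = ⟨rk (F s), hrkle _⟩ :=
      Fin.ext (cnt_uOf hrk0 hrkn hrkmono hF s)
    rw [e]
    exact hcv (F s) (Or.inl ⟨s, rfl⟩) _
  · funext s
    show c ⟨cnt (uOf (n := n) G rk) s, cnt_lt _ _⟩ = G s
    have e : (⟨cnt (uOf (n := n) G rk) s, cnt_lt _ _⟩ : Fin (n+1)) = ⟨rk (G s), hrkle _⟩ :=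
      Fin.ext (cnt_uOf hrk0 hrkn hrkmono hG s)
    rw [e]
    exact hcv (G s) (Or.inr ⟨s, rfl⟩) _

/-- realization of a single step function -/
lemma exists_pt {F : ℝ → L} (hF : StepM F) : ∃ α : AffineVersion L n ℝ, Phi α = F := by
  obtain ⟨p, q, -, -, hp, -⟩ :=
    exists_pt_pair hrk0 hrkn hrkmono hrkcov hF hF (fun s => le_rfl)
      (by simpa using mono_range_chain hF.1)
  exact ⟨mkA p, hp⟩

/-- a single step of `≤ M` between realizations of chain-compatible comparable functions -/
lemma stepLe_of_chain {F G : ℝ → L} (hF : StepM F) (hG : StepM G) (hGF : ∀ s, G s ≤ F s)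
    (hch : IsChain (· ≤ ·) (Set.range F ∪ Set.range G))
    {α β : AffineVersion L n ℝ} (hα : Phi α = F) (hβ : Phi β = G) : stepLe α β := by
  obtain ⟨p, q, hc, hu, hp, hq⟩ := exists_pt_pair hrk0 hrkn hrkmono hrkcov hF hG hGF hch
  refine ⟨p, q, ?_, ?_, hc, hu⟩
  · apply Phi_inj hrk0 hrkn hrkmono
    rw [hα, Phi_mk, hp]
  · apply Phi_inj hrk0 hrkn hrkmono
    rw [hβ, Phi_mk, hq]

end SURJ
end Aux14
namespace Aux14
variable {L : Type} [Lattice L] [BoundedOrder L] {n : ℕ} {rk : L → ℕ}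

/-- hybrid function: `G` before `t`, `F` from `t` on. -/
noncomputable def kfun (F G : ℝ → L) (t : ℝ) : ℝ → L := fun s => if s < t then G s else F s

lemma kfun_stepM {F G : ℝ → L} (hF : StepM F) (hG : StepM G) (hGF : ∀ s, G s ≤ F s) (t : ℝ) :
    StepM (kfun F G t) := by
  obtain ⟨hFm, hFrc, ⟨aF, haF⟩, ⟨bF, hbF⟩⟩ := hF
  obtain ⟨hGm, hGrc, ⟨aG, haG⟩, ⟨bG, hbG⟩⟩ := hG
  refine ⟨?_, ?_, ⟨min aF aG, ?_⟩, ⟨max bF bG, ?_⟩⟩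
  · intro s s' hss'
    unfold kfun
    by_cases h1 : s < t <;> by_cases h2 : s' < t <;> simp only [h1, h2, if_true, if_false]
    · exact hGm hss'
    · exact le_trans (hGm hss') (hGF s')
    · exact absurd (lt_of_le_of_lt hss' h2) h1
    · exact hFm hss'
  · intro s
    by_cases h : s < t
    · obtain ⟨δ, hδ, hc⟩ := hGrc s
      refine ⟨min δ (t - s), by simp [hδ]; linarith, fun t' h1 h2 => ?_⟩
      have ht' : t' < t := by
        have := min_le_right δ (t - s); linarith [lt_of_lt_of_le h2 (by linarith : s + min δ (t-s) ≤ s + (t - s))]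
      have hd : t' < s + δ := lt_of_lt_of_le h2 (by simp)
      simp only [kfun, if_pos h, if_pos ht']
      exact hc t' h1 hd
    · obtain ⟨δ, hδ, hc⟩ := hFrc s
      refine ⟨δ, hδ, fun t' h1 h2 => ?_⟩
      have ht' : ¬ t' < t := fun hc => h (lt_of_le_of_lt h1 hc)
      simp only [kfun, if_neg h, if_neg ht']
      exact hc t' h1 h2
  · intro s hs
    unfold kfun
    by_cases h : s < t <;> simp only [h, if_true, if_false]
    · exact haG s (le_trans hs (min_le_right _ _))
    · exact haF s (le_trans hs (min_le_left _ _))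
  · intro s hs
    unfold kfun
    by_cases h : s < t <;> simp only [h, if_true, if_false]
    · exact hbG s (le_trans (le_max_right _ _) hs)
    · exact hbF s (le_trans (le_max_left _ _) hs)

lemma kfun_anti {F G : ℝ → L} (hGF : ∀ s, G s ≤ F s) {t t' : ℝ} (htt' : t ≤ t') :
    ∀ s, kfun F G t' s ≤ kfun F G t s := by
  intro s
  unfold kfun
  by_cases h1 : s < t' <;> by_cases h2 : s < t <;> simp only [h1, h2, if_true, if_false]
  · exact le_rfl
  · exact hGF s
  · exact absurd (lt_of_lt_of_le h2 htt') h1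
  · exact le_rfl

lemma kfun_chain {F G : ℝ → L} (hFm : Monotone F) (hGm : Monotone G)
    (hGF : ∀ s, G s ≤ F s) {t t' : ℝ} (htt' : t ≤ t')
    (hconst : ∀ s, t ≤ s → s < t' → G s = G t) :
    IsChain (· ≤ ·) (Set.range (kfun F G t) ∪ Set.range (kfun F G t')) := by
  have hdesc : ∀ x ∈ Set.range (kfun F G t) ∪ Set.range (kfun F G t'),
      (∃ s, s < t' ∧ G s = x) ∨ (∃ s, t ≤ s ∧ F s = x) := by
    rintro x (⟨s, rfl⟩ | ⟨s, rfl⟩)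
    · by_cases h : s < t
      · exact Or.inl ⟨s, lt_of_lt_of_le h htt', by simp [kfun, h]⟩
      · exact Or.inr ⟨s, le_of_not_gt h, by simp [kfun, h]⟩
    · by_cases h : s < t'
      · exact Or.inl ⟨s, h, by simp [kfun, h]⟩
      · exact Or.inr ⟨s, le_trans htt' (le_of_not_gt h), by simp [kfun, h]⟩
  have cross : ∀ s s', s < t' → t ≤ s' → G s ≤ F s' ∨ F s' ≤ G s := by
    intro s s' hs hs'
    rcases le_total s s' with h | h
    · exact Or.inl (le_trans (hGm h) (hGF s'))
    · -- s' ≤ s, t ≤ s' ≤ s < t'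
      left
      have h1 : G s = G t := hconst s (le_trans hs' h) hs
      have h2 : G t ≤ G s' := hGm hs'
      rw [h1]
      exact le_trans h2 (hGF s')
  intro x hx y hy _
  obtain hx' := hdesc x hx
  obtain hy' := hdesc y hy
  rcases hx' with ⟨s, hs, rfl⟩ | ⟨s, hs, rfl⟩ <;> rcases hy' with ⟨s', hs', rfl⟩ | ⟨s', hs', rfl⟩
  · rcases le_total s s' with h | h
    · exact Or.inl (hGm h)
    · exact Or.inr (hGm h)
  · exact cross s s' hs hs'
  · exact (cross s' s hs' hs).symm
  · rcases le_total s s' with h | h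
    · exact Or.inl (hFm h)
    · exact Or.inr (hFm h)

section PATH
variable (hrk0 : rk ⊥ = 0) (hrkn : rk ⊤ = n) (hrkmono : StrictMono rk)
  (hrkcov : ∀ x y : L, x ⋖ y → rk y = rk x + 1)
include hrk0 hrkn hrkmono hrkcov

lemma path_aux {F G : ℝ → L} (hF : StepM F) (hG : StepM G) (hGF : ∀ s, G s ≤ F s)
    {β : AffineVersion L n ℝ} (hβ : Phi β = G) :
    ∀ m : ℕ, ∀ t : ℝ, ∀ α' : AffineVersion L n ℝ, Phi α' = kfun F G t →
      (G '' Set.Ici t).ncard ≤ m → leM α' β := by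
  intro m
  induction m with
  | zero =>
    intro t α' _ hcard
    exfalso
    have hfin : (G '' Set.Ici t).Finite :=
      (range_finite hrkn hrkmono hG.1).subset (Set.image_subset_range _ _)
    have hne : (G '' Set.Ici t).Nonempty := ⟨G t, t, Set.self_mem_Ici, rfl⟩
    have := Set.ncard_pos hfin |>.2 hne
    omega
  | succ m ih =>
    intro t α' hα' hcard
    by_cases hGt : G t = ⊤
    · have hkG : kfun F G t = G := by
        funext s
        by_cases h : s < t
        · simp [kfun, h]
        · simp only [kfun, h, if_false]
          have h1 : G s = ⊤ := le_antisymm le_top (hGt ▸ hG.1 (le_of_not_gt h))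
          have h2 : F s = ⊤ := le_antisymm le_top (h1 ▸ hGF s)
          rw [h1, h2]
      have : α' = β := Phi_inj hrk0 hrkn hrkmono (by rw [hα', hβ, hkG])
      rw [this]
      exact Relation.ReflTransGen.refl
    · obtain ⟨bG, hbG⟩ := hG.2.2.2
      set S := {s : ℝ | t ≤ s ∧ G s ≠ G t} with hS
      have hSne : S.Nonempty := by
        refine ⟨max t bG, le_max_left _ _, ?_⟩
        rw [hbG _ (le_max_right _ _)]
        exact fun h => hGt h.symm
      have hSbdd : BddBelow S := ⟨t, fun s hs => hs.1⟩
      obtain ⟨δ, hδ, hδc⟩ := hG.2.1 t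
      have htS : ∀ s ∈ S, t + δ ≤ s := by
        intro s hs
        by_contra hcon
        exact hs.2 (hδc s hs.1 (lt_of_not_ge hcon))
      set t' := sInf S with ht'
      have htt' : t + δ ≤ t' := le_csInf hSne htS
      have htt'' : t < t' := by linarith
      have hconst : ∀ s, t ≤ s → s < t' → G s = G t := by
        intro s h1 h2
        by_contra hcon
        exact absurd (csInf_le hSbdd (⟨h1, hcon⟩ : s ∈ S)) (by linarith)
      have hGt' : G t ≠ G t' := by
        obtain ⟨δ', hδ', hδc'⟩ := hG.2.1 t'
        obtain ⟨s₁, hs₁S, hs₁lt⟩ := (csInf_lt_iff hSbdd hSne).1 (by linarith : sInf S < t' + δ')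
        have hs₁ge : t' ≤ s₁ := csInf_le hSbdd hs₁S
        have := hδc' s₁ hs₁ge hs₁lt
        rw [← this]
        exact fun h => hs₁S.2 h.symm
      have hGlt : G t < G t' := lt_of_le_of_ne (hG.1 (le_of_lt htt'')) hGt'
      -- the measure decreases
      have hsub : G '' Set.Ici t' ⊆ (G '' Set.Ici t) \ {G t} := by
        rintro _ ⟨s, hs, rfl⟩
        constructor
        · exact ⟨s, le_trans (le_of_lt htt'') hs, rfl⟩
        · simp only [Set.mem_singleton_iff]
          intro h
          have : G t' ≤ G s := hG.1 hs
          have : G t' ≤ G t := h ▸ this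
          exact absurd (le_antisymm this (le_of_lt hGlt)) hGt'.symm
      have hfin : (G '' Set.Ici t).Finite :=
        (range_finite hrkn hrkmono hG.1).subset (Set.image_subset_range _ _)
      have hne : (G '' Set.Ici t).Nonempty := ⟨G t, t, Set.self_mem_Ici, rfl⟩
      have hcard' : (G '' Set.Ici t').ncard ≤ m := by
        have h1 : (G '' Set.Ici t').ncard ≤ ((G '' Set.Ici t) \ {G t}).ncard :=
          Set.ncard_le_ncard hsub (hfin.subset Set.diff_subset)
        have h2 : ((G '' Set.Ici t) \ {G t}).ncard = (G '' Set.Ici t).ncard - 1 :=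
          Set.ncard_diff_singleton_of_mem ⟨t, Set.self_mem_Ici, rfl⟩
        have h3 : 1 ≤ (G '' Set.Ici t).ncard := (Set.ncard_pos hfin).2 hne
        omega
      obtain ⟨α'', hα''⟩ := exists_pt hrk0 hrkn hrkmono hrkcov
        (kfun_stepM hF hG hGF t')
      have hstep : stepLe α' α'' :=
        stepLe_of_chain hrk0 hrkn hrkmono hrkcov (kfun_stepM hF hG hGF t)
          (kfun_stepM hF hG hGF t') (kfun_anti hGF (le_of_lt htt''))
          (kfun_chain hF.1 hG.1 hGF (le_of_lt htt'') hconst) hα' hα''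
      exact Relation.ReflTransGen.head hstep (ih t' α'' hα'' hcard')

lemma leM_of_le {α β : AffineVersion L n ℝ} (h : ∀ s, Phi β s ≤ Phi α s) : leM α β := by
  obtain ⟨aF, haF⟩ := (Phi_stepM α).2.2.1
  obtain ⟨aG, haG⟩ := (Phi_stepM β).2.2.1
  have hkF : kfun (Phi α) (Phi β) (min aF aG) = Phi α := by
    funext s
    unfold kfun
    by_cases hs : s < min aF aG
    · simp only [hs, if_true]
      rw [haG s (le_of_lt (lt_of_lt_of_le hs (min_le_right _ _))),
        haF s (le_of_lt (lt_of_lt_of_le hs (min_le_left _ _)))]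
    · simp [hs]
  exact path_aux hrk0 hrkn hrkmono hrkcov (Phi_stepM α) (Phi_stepM β) h rfl
    ((Phi β) '' Set.Ici (min aF aG)).ncard (min aF aG) α hkF.symm le_rfl

lemma leM_iff {α β : AffineVersion L n ℝ} : leM α β ↔ ∀ s, Phi β s ≤ Phi α s :=
  ⟨Phi_antitone, leM_of_le hrk0 hrkn hrkmono hrkcov⟩

end PATH
end Aux14
namespace Aux14
variable {L : Type} [Lattice L] [BoundedOrder L] {n : ℕ} {rk : L → ℕ}

lemma Phi_translate (t : ℝ) (α : AffineVersion L n ℝ) :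
    Phi (translateAff t α) = fun s => Phi α (s - t) := by
  induction α using Quot.ind with | _ p => ?_
  funext s
  show phiPt (translatePt t p) s = phiPt p (s - t)
  have hcnt : cnt (translatePt t p).u s = cnt p.u (s - t) := by
    unfold cnt
    congr 1
    apply Finset.filter_congr
    intro i _
    show p.u i + t ≤ s ↔ p.u i ≤ s - t
    constructor <;> intro h <;> linarith
  show (translatePt t p).c ⟨cnt (translatePt t p).u s, _⟩ = p.c ⟨cnt p.u (s - t), _⟩
  have : (translatePt t p).c = p.c := rfl
  rw [this]
  congr 1
  exact Fin.ext hcnt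

/-- the set of scales relating `α` and `β`, in terms of step functions -/
def Sphi (α β : AffineVersion L n ℝ) : Set ℝ :=
  {t : ℝ | 0 ≤ t ∧ (∀ s, Phi β s ≤ Phi α (s + t)) ∧ (∀ s, Phi α (s - t) ≤ Phi β s)}

section MET
variable (hrk0 : rk ⊥ = 0) (hrkn : rk ⊤ = n) (hrkmono : StrictMono rk)
  (hrkcov : ∀ x y : L, x ⋖ y → rk y = rk x + 1)
include hrk0 hrkn hrkmono hrkcov

lemma Sdef_eq (α β : AffineVersion L n ℝ) :
    {t : ℝ | 0 ≤ t ∧ leM (translateAff (-t) α) β ∧ leM β (translateAff t α)} = Sphi α β := by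
  ext t
  have h1 : leM (translateAff (-t) α) β ↔ ∀ s, Phi β s ≤ Phi α (s + t) := by
    rw [leM_iff hrk0 hrkn hrkmono hrkcov]
    rw [Phi_translate]
    constructor <;> intro h s
    · simpa only [sub_neg_eq_add] using h s
    · simpa only [sub_neg_eq_add] using h s
  have h2 : leM β (translateAff t α) ↔ ∀ s, Phi α (s - t) ≤ Phi β s := by
    rw [leM_iff hrk0 hrkn hrkmono hrkcov]
    rw [Phi_translate]
  simp only [Set.mem_setOf_eq, Sphi, h1, h2]

omit hrk0 hrkn hrkmono hrkcov

lemma Sphi_nonempty (α β : AffineVersion L n ℝ) : (Sphi α β).Nonempty := by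
  obtain ⟨-, -, ⟨aα, haα⟩, ⟨bα, hbα⟩⟩ := Phi_stepM α
  obtain ⟨-, -, ⟨aβ, haβ⟩, ⟨bβ, hbβ⟩⟩ := Phi_stepM β
  refine ⟨max (max (bα - aβ) (bβ - aα)) 0, le_max_right _ _, fun s => ?_, fun s => ?_⟩
  · by_cases h : bα ≤ s + max (max (bα - aβ) (bβ - aα)) 0
    · rw [hbα _ h]
      exact le_top
    · have h2 : s ≤ aβ := by
        have h3 : bα - aβ ≤ max (max (bα - aβ) (bβ - aα)) 0 :=
          le_trans (le_max_left _ _) (le_max_left _ _)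
        push_neg at h
        linarith
      rw [haβ _ h2]
      exact bot_le
  · by_cases h : s - max (max (bα - aβ) (bβ - aα)) 0 ≤ aα
    · rw [haα _ h]
      exact bot_le
    · have h2 : bβ ≤ s := by
        have h3 : bβ - aα ≤ max (max (bα - aβ) (bβ - aα)) 0 :=
          le_trans (le_max_right _ _) (le_max_left _ _)
        push_neg at h
        linarith
      rw [hbβ _ h2]
      exact le_top

lemma Sphi_bddBelow (α β : AffineVersion L n ℝ) : BddBelow (Sphi α β) :=
  ⟨0, fun _ ht => ht.1⟩

lemma Sphi_symm (α β : AffineVersion L n ℝ) : Sphi α β = Sphi β α := by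
  have key : ∀ γ δ : AffineVersion L n ℝ, ∀ t, t ∈ Sphi γ δ → t ∈ Sphi δ γ := by
    rintro γ δ t ⟨h0, h1, h2⟩
    refine ⟨h0, fun s => ?_, fun s => ?_⟩
    · have := h2 (s + t)
      rwa [add_sub_cancel_right] at this
    · have := h1 (s - t)
      rwa [sub_add_cancel] at this
  ext t
  exact ⟨key α β t, key β α t⟩

lemma Sphi_inf_mem (α β : AffineVersion L n ℝ) : sInf (Sphi α β) ∈ Sphi α β := by
  have hne := Sphi_nonempty α β
  have hbdd := Sphi_bddBelow α β
  have h0 : 0 ≤ sInf (Sphi α β) := le_csInf hne fun t ht => ht.1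
  refine ⟨h0, fun s => ?_, fun s => ?_⟩
  · obtain ⟨δ, hδ, hrc⟩ := (Phi_stepM α).2.1 (s + sInf (Sphi α β))
    obtain ⟨t, htS, htlt⟩ := (csInf_lt_iff hbdd hne).1
      (by linarith : sInf (Sphi α β) < sInf (Sphi α β) + δ)
    have htge : sInf (Sphi α β) ≤ t := csInf_le hbdd htS
    calc Phi β s ≤ Phi α (s + t) := htS.2.1 s
    _ = Phi α (s + sInf (Sphi α β)) := hrc _ (by linarith) (by linarith)
  · obtain ⟨δ, hδ, hrc⟩ := (Phi_stepM β).2.1 s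
    obtain ⟨t, htS, htlt⟩ := (csInf_lt_iff hbdd hne).1
      (by linarith : sInf (Sphi α β) < sInf (Sphi α β) + δ)
    have htge : sInf (Sphi α β) ≤ t := csInf_le hbdd htS
    have key := htS.2.2 (s + (t - sInf (Sphi α β)))
    have e1 : s + (t - sInf (Sphi α β)) - t = s - sInf (Sphi α β) := by ring
    have e2 : Phi β (s + (t - sInf (Sphi α β))) = Phi β s :=
      hrc _ (by linarith) (by linarith)
    rw [e1, e2] at key
    exact key

lemma Sphi_add {α β γ : AffineVersion L n ℝ} {t₁ t₂ : ℝ}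
    (h1 : t₁ ∈ Sphi α β) (h2 : t₂ ∈ Sphi β γ) : t₁ + t₂ ∈ Sphi α γ := by
  obtain ⟨h10, h11, h12⟩ := h1
  obtain ⟨h20, h21, h22⟩ := h2
  refine ⟨by linarith, fun s => ?_, fun s => ?_⟩
  · calc Phi γ s ≤ Phi β (s + t₂) := h21 s
    _ ≤ Phi α (s + t₂ + t₁) := h11 (s + t₂)
    _ = Phi α (s + (t₁ + t₂)) := by ring_nf
  · calc Phi α (s - (t₁ + t₂)) = Phi α (s - t₂ - t₁) := by ring_nf
    _ ≤ Phi β (s - t₂) := h12 (s - t₂)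
    _ ≤ Phi γ s := h22 s

lemma Sphi_zero_self (α : AffineVersion L n ℝ) : (0 : ℝ) ∈ Sphi α α :=
  ⟨le_rfl, fun s => by rw [add_zero], fun s => by rw [sub_zero]⟩

lemma Sphi_zero_eq (hrk0 : rk ⊥ = 0) (hrkn : rk ⊤ = n) (hrkmono : StrictMono rk)
    {α β : AffineVersion L n ℝ} (h : (0 : ℝ) ∈ Sphi α β) : α = β := by
  obtain ⟨-, h1, h2⟩ := h
  apply Phi_inj hrk0 hrkn hrkmono
  funext s
  have ha := h1 s
  have hb := h2 s
  rw [add_zero] at ha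
  rw [sub_zero] at hb
  exact le_antisymm hb ha

end MET

section LAT
variable (hrk0 : rk ⊥ = 0) (hrkn : rk ⊤ = n) (hrkmono : StrictMono rk)
  (hrkcov : ∀ x y : L, x ⋖ y → rk y = rk x + 1)
include hrk0 hrkn hrkmono hrkcov

lemma exists_meet (α β : AffineVersion L n ℝ) :
    ∃ m, leM m α ∧ leM m β ∧ ∀ w, leM w α → leM w β → leM w m := by
  obtain ⟨hαm, hαrc, ⟨aα, haα⟩, ⟨bα, hbα⟩⟩ := Phi_stepM α
  obtain ⟨hβm, hβrc, ⟨aβ, haβ⟩, ⟨bβ, hbβ⟩⟩ := Phi_stepM β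
  have hstep : StepM (fun s => Phi α s ⊔ Phi β s) := by
    refine ⟨fun s t hst => sup_le_sup (hαm hst) (hβm hst), ?_, ⟨min aα aβ, ?_⟩, ⟨bα, ?_⟩⟩
    · intro s
      obtain ⟨δ1, hδ1, hc1⟩ := hαrc s
      obtain ⟨δ2, hδ2, hc2⟩ := hβrc s
      refine ⟨min δ1 δ2, lt_min hδ1 hδ2, fun t h1 h2 => ?_⟩
      show Phi α t ⊔ Phi β t = Phi α s ⊔ Phi β s
      rw [hc1 t h1 (lt_of_lt_of_le h2 (by simp [min_le_left])),
        hc2 t h1 (lt_of_lt_of_le h2 (by simp [min_le_right]))]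
    · intro s hs
      show Phi α s ⊔ Phi β s = ⊥
      rw [haα s (le_trans hs (min_le_left _ _)), haβ s (le_trans hs (min_le_right _ _))]
      simp
    · intro s hs
      show Phi α s ⊔ Phi β s = ⊤
      rw [hbα s hs]
      simp
  obtain ⟨m, hm⟩ := exists_pt hrk0 hrkn hrkmono hrkcov hstep
  refine ⟨m, ?_, ?_, ?_⟩
  · rw [leM_iff hrk0 hrkn hrkmono hrkcov, hm]
    exact fun s => le_sup_left
  · rw [leM_iff hrk0 hrkn hrkmono hrkcov, hm]
    exact fun s => le_sup_right
  · intro w hwα hwβ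
    rw [leM_iff hrk0 hrkn hrkmono hrkcov] at hwα hwβ ⊢
    rw [hm]
    exact fun s => sup_le (hwα s) (hwβ s)

lemma exists_join (α β : AffineVersion L n ℝ) :
    ∃ j, leM α j ∧ leM β j ∧ ∀ w, leM α w → leM β w → leM j w := by
  obtain ⟨hαm, hαrc, ⟨aα, haα⟩, ⟨bα, hbα⟩⟩ := Phi_stepM α
  obtain ⟨hβm, hβrc, ⟨aβ, haβ⟩, ⟨bβ, hbβ⟩⟩ := Phi_stepM β
  have hstep : StepM (fun s => Phi α s ⊓ Phi β s) := by
    refine ⟨fun s t hst => inf_le_inf (hαm hst) (hβm hst), ?_, ⟨aα, ?_⟩, ⟨max bα bβ, ?_⟩⟩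
    · intro s
      obtain ⟨δ1, hδ1, hc1⟩ := hαrc s
      obtain ⟨δ2, hδ2, hc2⟩ := hβrc s
      refine ⟨min δ1 δ2, lt_min hδ1 hδ2, fun t h1 h2 => ?_⟩
      show Phi α t ⊓ Phi β t = Phi α s ⊓ Phi β s
      rw [hc1 t h1 (lt_of_lt_of_le h2 (by simp [min_le_left])),
        hc2 t h1 (lt_of_lt_of_le h2 (by simp [min_le_right]))]
    · intro s hs
      show Phi α s ⊓ Phi β s = ⊥
      rw [haα s hs]
      simp
    · intro s hs
      show Phi α s ⊓ Phi β s = ⊤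
      rw [hbα s (le_trans (le_max_left _ _) hs), hbβ s (le_trans (le_max_right _ _) hs)]
      simp
  obtain ⟨j, hj⟩ := exists_pt hrk0 hrkn hrkmono hrkcov hstep
  refine ⟨j, ?_, ?_, ?_⟩
  · rw [leM_iff hrk0 hrkn hrkmono hrkcov, hj]
    exact fun s => inf_le_left
  · rw [leM_iff hrk0 hrkn hrkmono hrkcov, hj]
    exact fun s => inf_le_right
  · intro w hαw hβw
    rw [leM_iff hrk0 hrkn hrkmono hrkcov] at hαw hβw ⊢
    rw [hj]
    exact fun s => le_inf (hαw s) (hβw s)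

lemma exists_lub_M (sset : Set (AffineVersion L n ℝ)) (hne : sset.Nonempty)
    (hbd : ∃ b, ∀ x ∈ sset, leM x b) :
    ∃ l, (∀ x ∈ sset, leM x l) ∧ ∀ b, (∀ x ∈ sset, leM x b) → leM l b := by
  classical
  obtain ⟨x₀, hx₀⟩ := hne
  obtain ⟨b₀, hb₀⟩ := hbd
  have hVne : ∀ s : ℝ, {v : L | ∃ x ∈ sset, Phi x s = v}.Nonempty :=
    fun s => ⟨Phi x₀ s, x₀, hx₀, rfl⟩
  have hglb : ∀ s : ℝ, ∃ m, IsGLB {v : L | ∃ x ∈ sset, Phi x s = v} m :=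
    fun s => exists_isGLB hrkmono _ (hVne s)
  set Gfun : ℝ → L := fun s => Classical.choose (hglb s) with hGfun
  have hspec : ∀ s, IsGLB {v : L | ∃ x ∈ sset, Phi x s = v} (Gfun s) :=
    fun s => Classical.choose_spec (hglb s)
  have hlb : ∀ s, ∀ x ∈ sset, Gfun s ≤ Phi x s :=
    fun s x hx => (hspec s).1 ⟨x, hx, rfl⟩
  have hglb2 : ∀ s, ∀ w : L, (∀ x ∈ sset, w ≤ Phi x s) → w ≤ Gfun s := by
    intro s w hw
    exact (hspec s).2 fun v ⟨x, hx, hv⟩ => hv ▸ hw x hx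
  have hmono : Monotone Gfun := by
    intro s s' hss'
    apply hglb2 s'
    intro x hx
    exact le_trans (hlb s x hx) ((Phi_stepM x).1 hss')
  have hrc : RightCont Gfun := by
    intro s
    have hWch : IsChain (· ≤ ·) {v : L | ∃ δ : ℝ, (0 < δ ∧ δ ≤ 1) ∧ Gfun (s + δ) = v} := by
      rintro _ ⟨δ1, hδ1, rfl⟩ _ ⟨δ2, hδ2, rfl⟩ _
      rcases le_total δ1 δ2 with h | h
      · exact Or.inl (hmono (by linarith))
      · exact Or.inr (hmono (by linarith))
    obtain ⟨v, ⟨δ₀, hδ₀, hv⟩, hvmin⟩ := chain_min hrkmono hWch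
      ⟨Gfun (s + 1), 1, ⟨one_pos, le_rfl⟩, rfl⟩
    have hconst : ∀ δ : ℝ, 0 < δ → δ ≤ δ₀ → Gfun (s + δ) = v := by
      intro δ h1 h2
      refine le_antisymm (hv ▸ hmono (by linarith)) ?_
      exact hvmin _ ⟨δ, ⟨h1, le_trans h2 hδ₀.2⟩, rfl⟩
    have hGs : Gfun s = v := by
      refine le_antisymm (hv ▸ hmono (by linarith [hδ₀.1])) ?_
      apply hglb2 s
      intro x hx
      obtain ⟨δx, hδx, hcx⟩ := (Phi_stepM x).2.1 s
      have hδ' : 0 < min δx δ₀ / 2 := by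
        have := hδ₀.1
        have : 0 < min δx δ₀ := lt_min hδx this
        linarith
      calc v = Gfun (s + min δx δ₀ / 2) := (hconst _ hδ' (by
              have := min_le_right δx δ₀
              have := hδ₀.1
              linarith)).symm
      _ ≤ Phi x (s + min δx δ₀ / 2) := hlb _ x hx
      _ = Phi x s := hcx _ (by linarith) (by
              have := min_le_left δx δ₀
              linarith)
    refine ⟨δ₀, hδ₀.1, fun t h1 h2 => ?_⟩
    rcases eq_or_lt_of_le h1 with h | h
    · rw [← h]
    · have : Gfun t = v := by
        have : t = s + (t - s) := by ring
        rw [this]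
        exact hconst (t - s) (by linarith) (by linarith)
      rw [this, hGs]
  have hbot : ∃ a, ∀ s, s ≤ a → Gfun s = ⊥ := by
    obtain ⟨a, ha⟩ := (Phi_stepM x₀).2.2.1
    exact ⟨a, fun s hs => le_bot_iff.1 (by
      have := hlb s x₀ hx₀
      rwa [ha s hs] at this)⟩
  have htop : ∃ b, ∀ s, b ≤ s → Gfun s = ⊤ := by
    obtain ⟨b, hb⟩ := (Phi_stepM b₀).2.2.2
    refine ⟨b, fun s hs => top_le_iff.1 ?_⟩
    have : ∀ x ∈ sset, Phi b₀ s ≤ Phi x s :=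
      fun x hx => Phi_antitone (hb₀ x hx) s
    have h2 := hglb2 s _ this
    rwa [hb s hs] at h2
  obtain ⟨l, hl⟩ := exists_pt hrk0 hrkn hrkmono hrkcov ⟨hmono, hrc, hbot, htop⟩
  refine ⟨l, ?_, ?_⟩
  · intro x hx
    rw [leM_iff hrk0 hrkn hrkmono hrkcov, hl]
    exact fun s => hlb s x hx
  · intro b hb
    rw [leM_iff hrk0 hrkn hrkmono hrkcov, hl]
    intro s
    exact hglb2 s _ fun x hx => Phi_antitone (hb x hx) s

end LAT

/-- right regularization of a monotone function -/
lemma reg_exists (hrkmono : StrictMono rk) {W : ℝ → L} (hW : Monotone W) :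
    ∃ Z : ℝ → L, Monotone Z ∧ RightCont Z ∧ (∀ s, W s ≤ Z s) ∧
      (∀ s t, s < t → Z s ≤ W t) := by
  classical
  have hch : ∀ s : ℝ, IsChain (· ≤ ·) {v : L | ∃ t : ℝ, s < t ∧ W t = v} := by
    rintro s _ ⟨t1, ht1, rfl⟩ _ ⟨t2, ht2, rfl⟩ _
    rcases le_total t1 t2 with h | h
    · exact Or.inl (hW h)
    · exact Or.inr (hW h)
  have hmin : ∀ s : ℝ, ∃ v ∈ {v : L | ∃ t : ℝ, s < t ∧ W t = v},
      ∀ w ∈ {v : L | ∃ t : ℝ, s < t ∧ W t = v}, v ≤ w :=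
    fun s => chain_min hrkmono (hch s) ⟨W (s + 1), s + 1, by linarith, rfl⟩
  set Z : ℝ → L := fun s => Classical.choose (hmin s) with hZ
  have hspec : ∀ s, Z s ∈ {v : L | ∃ t : ℝ, s < t ∧ W t = v} ∧
      ∀ w ∈ {v : L | ∃ t : ℝ, s < t ∧ W t = v}, Z s ≤ w := by
    intro s
    obtain ⟨h1, h2⟩ := Classical.choose_spec (hmin s)
    exact ⟨h1, h2⟩
  have hZle : ∀ s t, s < t → Z s ≤ W t := fun s t hst => (hspec s).2 _ ⟨t, hst, rfl⟩
  have hWZ : ∀ s, W s ≤ Z s := by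
    intro s
    obtain ⟨t, hst, hWt⟩ := (hspec s).1
    rw [← hWt]
    exact hW (le_of_lt hst)
  have hZmono : Monotone Z := by
    intro s s' hss'
    obtain ⟨t, hst, hWt⟩ := (hspec s').1
    rw [← hWt]
    exact hZle s t (lt_of_le_of_lt hss' hst)
  refine ⟨Z, hZmono, ?_, hWZ, hZle⟩
  intro s
  obtain ⟨t₀, hst₀, hWt₀⟩ := (hspec s).1
  refine ⟨t₀ - s, by linarith, fun t' h1 h2 => ?_⟩
  refine le_antisymm ?_ (hZmono h1)
  calc Z t' ≤ W t₀ := hZle t' t₀ (by linarith)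
  _ = Z s := hWt₀

end Aux14
namespace Aux14
variable {L : Type} [Lattice L] [BoundedOrder L] {n : ℕ} {rk : L → ℕ}

lemma Sphi_upclosed {α β : AffineVersion L n ℝ} {t t' : ℝ} (ht : t ∈ Sphi α β)
    (htt' : t ≤ t') : t' ∈ Sphi α β := by
  obtain ⟨h0, h1, h2⟩ := ht
  refine ⟨le_trans h0 htt', fun s => ?_, fun s => ?_⟩
  · exact le_trans (h1 s) ((Phi_stepM α).1 (by linarith))
  · exact le_trans ((Phi_stepM α).1 (by linarith : s - t' ≤ s - t)) (h2 s)

end Aux14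


open Aux14

/-- `(M_ℝ, ≤_M)` is a lattice in which every (nonempty) subset bounded above has a
least upper bound, and `d(α,β) = inf {t ≥ 0 : (-t)·α ≤_M β ≤_M t·α}` is a metric on
`M_ℝ` making it an injective metric space. -/
theorem stmt14 (L : Type) [Lattice L] [BoundedOrder L] (n : ℕ)
    (rk : L → ℕ) (hrk0 : rk ⊥ = 0) (hrkn : rk ⊤ = n)
    (hrkmono : StrictMono rk)
    (hrkcov : ∀ x y : L, x ⋖ y → rk y = rk x + 1)
    (d : AffineVersion L n ℝ → AffineVersion L n ℝ → ℝ)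
    (hd : ∀ α β : AffineVersion L n ℝ,
      d α β = sInf {t : ℝ | 0 ≤ t ∧ leM (translateAff (-t) α) β ∧ leM β (translateAff t α)}) :
    -- (M_ℝ, ≤_M) is a poset and a lattice
    (∀ α β : AffineVersion L n ℝ, leM α β → leM β α → α = β) ∧
    (∀ α β : AffineVersion L n ℝ,
      ∃ m, leM m α ∧ leM m β ∧ ∀ w, leM w α → leM w β → leM w m) ∧
    (∀ α β : AffineVersion L n ℝ,
      ∃ j, leM α j ∧ leM β j ∧ ∀ w, leM α w → leM β w → leM j w) ∧
    -- every subset bounded above has a least upper bound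
    (∀ s : Set (AffineVersion L n ℝ), s.Nonempty → (∃ b, ∀ x ∈ s, leM x b) →
      ∃ l, (∀ x ∈ s, leM x l) ∧ ∀ b, (∀ x ∈ s, leM x b) → leM l b) ∧
    -- d is a metric
    (∀ α β, 0 ≤ d α β) ∧
    (∀ α β, (d α β = 0 ↔ α = β)) ∧
    (∀ α β, d α β = d β α) ∧
    (∀ α β γ, d α γ ≤ d α β + d β γ) ∧
    -- (M_ℝ, d) is injective
    (∀ (ι : Type) (x : ι → AffineVersion L n ℝ) (r : ι → ℝ), (∀ i, 0 ≤ r i) →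
      (∀ i j, d (x i) (x j) ≤ r i + r j) → ∃ z, ∀ i, d (x i) z ≤ r i) := by
  have hdS : ∀ α β : AffineVersion L n ℝ, d α β = sInf (Sphi α β) := by
    intro α β
    rw [hd α β, Sdef_eq hrk0 hrkn hrkmono hrkcov α β]
  refine ⟨?_, ?_, ?_, ?_, ?_, ?_, ?_, ?_, ?_⟩
  · -- antisymmetry
    intro α β h1 h2
    apply Phi_inj hrk0 hrkn hrkmono
    funext s
    exact le_antisymm (Phi_antitone h2 s) (Phi_antitone h1 s)
  · exact exists_meet hrk0 hrkn hrkmono hrkcov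
  · exact exists_join hrk0 hrkn hrkmono hrkcov
  · exact exists_lub_M hrk0 hrkn hrkmono hrkcov
  · -- nonnegativity
    intro α β
    rw [hdS α β]
    exact le_csInf (Sphi_nonempty α β) fun t ht => ht.1
  · -- d = 0 iff equal
    intro α β
    rw [hdS α β]
    constructor
    · intro h
      have hmem := Sphi_inf_mem α β
      rw [h] at hmem
      exact Sphi_zero_eq hrk0 hrkn hrkmono hmem
    · rintro rfl
      refine le_antisymm (csInf_le (Sphi_bddBelow α α) (Sphi_zero_self α))
        (le_csInf (Sphi_nonempty α α) fun t ht => ht.1)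
  · -- symmetry
    intro α β
    rw [hdS α β, hdS β α, Sphi_symm]
  · -- triangle inequality
    intro α β γ
    rw [hdS α γ, hdS α β, hdS β γ]
    exact csInf_le (Sphi_bddBelow α γ) (Sphi_add (Sphi_inf_mem α β) (Sphi_inf_mem β γ))
  · -- hyperconvexity
    intro ι x r hr hxr
    rcases isEmpty_or_nonempty ι with hι | hι
    · have hF0 : StepM (fun s : ℝ => if s < 0 then (⊥ : L) else ⊤) := by
        refine ⟨?_, ?_, ⟨-1, ?_⟩, ⟨0, ?_⟩⟩
        · intro s t hst
          by_cases h1 : s < 0 <;> by_cases h2 : t < 0 <;>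
            simp only [h1, h2, if_true, if_false]
          · exact le_rfl
          · exact bot_le
          · exact absurd (lt_of_le_of_lt hst h2) h1
          · exact le_rfl
        · intro s
          by_cases h : s < 0
          · exact ⟨-s, by linarith, fun t h1 h2 => by
              have : t < 0 := by linarith
              simp [this, h]⟩
          · exact ⟨1, one_pos, fun t h1 h2 => by
              have : ¬ t < 0 := by intro hc; exact h (by linarith)
              simp [this, h]⟩
        · intro s hs
          have : s < 0 := by linarith
          simp [this]
        · intro s hs
          have : ¬ s < 0 := by linarith
          simp [this]
      obtain ⟨z, -⟩ := exists_pt hrk0 hrkn hrkmono hrkcov hF0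
      exact ⟨z, fun i => hι.elim i⟩
    · have i₀ : ι := Classical.arbitrary ι
      -- key cross inequality
      have key : ∀ i j : ι, ∀ s : ℝ, Phi (x j) (s - r j) ≤ Phi (x i) (s + r i) := by
        intro i j s
        have hle : sInf (Sphi (x i) (x j)) ≤ r i + r j := by rw [← hdS]; exact hxr i j
        have hmem : r i + r j ∈ Sphi (x i) (x j) :=
          Sphi_upclosed (Sphi_inf_mem (x i) (x j)) hle
        have := hmem.2.1 (s - r j)
        have e : s - r j + (r i + r j) = s + r i := by ring
        rwa [e] at this
      have hlub : ∀ s : ℝ, ∃ m, IsLUB {v : L | ∃ i : ι, Phi (x i) (s - r i) = v} m :=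
        fun s => exists_isLUB hrkn hrkmono _ ⟨Phi (x i₀) (s - r i₀), i₀, rfl⟩
      set W : ℝ → L := fun s => Classical.choose (hlub s) with hW
      have hspec : ∀ s, IsLUB {v : L | ∃ i : ι, Phi (x i) (s - r i) = v} (W s) :=
        fun s => Classical.choose_spec (hlub s)
      have hWub : ∀ s, ∀ i, Phi (x i) (s - r i) ≤ W s := fun s i => (hspec s).1 ⟨i, rfl⟩
      have hWlub : ∀ s, ∀ w : L, (∀ i, Phi (x i) (s - r i) ≤ w) → W s ≤ w :=
        fun s w hw => (hspec s).2 fun v ⟨i, hv⟩ => hv ▸ hw i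
      have hWmono : Monotone W := by
        intro s s' hss'
        apply hWlub
        intro i
        exact le_trans ((Phi_stepM (x i)).1 (by linarith : s - r i ≤ s' - r i)) (hWub s' i)
      have hWle : ∀ s i, W s ≤ Phi (x i) (s + r i) := fun s i => hWlub s _ fun j => key i j s
      obtain ⟨Z, hZmono, hZrc, hWZ, hZW⟩ := reg_exists hrkmono hWmono
      have hZle : ∀ s i, Z s ≤ Phi (x i) (s + r i) := by
        intro s i
        obtain ⟨δ, hδ, hrc⟩ := (Phi_stepM (x i)).2.1 (s + r i)
        calc Z s ≤ W (s + δ/2) := hZW s _ (by linarith)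
        _ ≤ Phi (x i) (s + δ/2 + r i) := hWle _ i
        _ = Phi (x i) (s + r i) := hrc _ (by linarith) (by linarith)
      have hbot : ∃ a, ∀ s, s ≤ a → Z s = ⊥ := by
        obtain ⟨a, ha⟩ := (Phi_stepM (x i₀)).2.2.1
        refine ⟨a - r i₀ - 1, fun s hs => le_bot_iff.1 ?_⟩
        have := hZle s i₀
        rwa [ha (s + r i₀) (by linarith)] at this
      have htop : ∃ b, ∀ s, b ≤ s → Z s = ⊤ := by
        obtain ⟨b, hb⟩ := (Phi_stepM (x i₀)).2.2.2
        refine ⟨b + r i₀, fun s hs => top_le_iff.1 ?_⟩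
        calc (⊤ : L) = Phi (x i₀) (s - r i₀) := (hb _ (by linarith)).symm
        _ ≤ W s := hWub s i₀
        _ ≤ Z s := hWZ s
      obtain ⟨z, hz⟩ := exists_pt hrk0 hrkn hrkmono hrkcov ⟨hZmono, hZrc, hbot, htop⟩
      refine ⟨z, fun i => ?_⟩
      rw [hdS]
      apply csInf_le (Sphi_bddBelow (x i) z)
      refine ⟨hr i, fun s => ?_, fun s => ?_⟩
      · rw [hz]
        exact hZle s i
      · rw [hz]
        exact le_trans (hWub s i) (hWZ s)
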